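/- Double-exponential decay of codebooks with few unique codewords (Lemma 10): Let X be a finite alphabet. For every R̃ > 0 and ε > 0 there exist c > 0 and N₀ ∈ ℕ such that for all n ≥ N₀ and every n-type Q on X with H(Q) ≥ R̃ + ε the following holds: if N = ⌈exp(nR̃)⌉ and C is an N-tuple drawn uniformly from T_n(Q)^N, then the probability that C has at most N/2 distinct entries is at most exp(−c·exp(nR̃)). -/

import Mathlib

open scoped BigOperators Classical

noncomputable section

/-- A probability mass function on a finite alphabet. -/
def IsPMF {X : Type*} [Fintype X] (p : X → ℝ) : Prop :=
  (∀ a, 0 ≤ p a) ∧ ∑ a, p a = 1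

/-- A (discrete memoryless) channel from `X` to `Y`: every row is a pmf. -/
def IsChannel {X Y : Type*} [Fintype X] [Fintype Y] (W : X → Y → ℝ) : Prop :=
  ∀ x, IsPMF (W x)

/-- Empirical distribution (type) of a sequence `x : Fin n → X`. -/
def empDist {X : Type*} [Fintype X] {n : ℕ} (x : Fin n → X) (a : X) : ℝ :=
  ((Finset.univ.filter fun t => x t = a).card : ℝ) / n

/-- `P` is an `n`-type on `X`: a pmf all of whose masses are multiples of `1/n`. -/
def IsNType {X : Type*} [Fintype X] (n : ℕ) (P : X → ℝ) : Prop :=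
  IsPMF P ∧ ∀ a, ∃ k : ℕ, (n : ℝ) * P a = k

/-- The type class `T_n(P)`: all sequences with empirical distribution `P`. -/
def typeClass {X : Type*} [Fintype X] (n : ℕ) (P : X → ℝ) : Finset (Fin n → X) :=
  Finset.univ.filter fun x => empDist x = P

/-- Shannon entropy (natural logarithm). -/
def shEntropy {X : Type*} [Fintype X] (p : X → ℝ) : ℝ :=
  ∑ a, Real.negMulLog (p a)

/-- Kullback–Leibler divergence (real-valued, with the usual `log` conventions). -/
def dKL {X : Type*} [Fintype X] (q p : X → ℝ) : ℝ :=
  ∑ a, q a * Real.log (q a / p a)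

/-- Conditional KL divergence `D(V‖W|P)`. -/
def condDKL {X Y : Type*} [Fintype X] [Fintype Y] (V W : X → Y → ℝ) (P : X → ℝ) : ℝ :=
  ∑ x, P x * dKL (V x) (W x)

def margFst {X Y : Type*} [Fintype X] [Fintype Y] (Q : X × Y → ℝ) (x : X) : ℝ :=
  ∑ y, Q (x, y)

def margSnd {X Y : Type*} [Fintype X] [Fintype Y] (Q : X × Y → ℝ) (y : Y) : ℝ :=
  ∑ x, Q (x, y)

/-- Mutual information of a joint pmf (natural logarithm). -/
def mutualInfo {X Y : Type*} [Fintype X] [Fintype Y] (Q : X × Y → ℝ) : ℝ :=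
  ∑ x, ∑ y, Q (x, y) * Real.log (Q (x, y) / (margFst Q x * margSnd Q y))

/-- Mutual information `I(P, V)` of the joint pmf `P(x)·V(y|x)`. -/
def miPV {X Y : Type*} [Fintype X] [Fintype Y] (P : X → ℝ) (V : X → Y → ℝ) : ℝ :=
  mutualInfo fun p => P p.1 * V p.1 p.2

/-- Positive part `|a|⁺ = max (a, 0)`. -/
def plusPart (a : ℝ) : ℝ := max a 0

def margXY {X Y U : Type*} [Fintype X] [Fintype Y] [Fintype U] (Q : X × Y × U → ℝ) :
    X × Y → ℝ := fun p => ∑ u, Q (p.1, p.2, u)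

def margYU {X Y U : Type*} [Fintype X] [Fintype Y] [Fintype U] (Q : X × Y × U → ℝ) :
    Y × U → ℝ := fun p => ∑ x, Q (x, p.1, p.2)

def margXU {X Y U : Type*} [Fintype X] [Fintype Y] [Fintype U] (Q : X × Y × U → ℝ) :
    X × U → ℝ := fun p => ∑ y, Q (p.1, y, p.2)

def margX3 {X Y U : Type*} [Fintype X] [Fintype Y] [Fintype U] (Q : X × Y × U → ℝ)
    (x : X) : ℝ := ∑ y, ∑ u, Q (x, y, u)

def margY3 {X Y U : Type*} [Fintype X] [Fintype Y] [Fintype U] (Q : X × Y × U → ℝ)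
    (y : Y) : ℝ := ∑ x, ∑ u, Q (x, y, u)

/-- Conditional mutual information `I_Q(X;U|Y)` of a joint pmf `Q` on `X × Y × U`. -/
def condMI3 {X Y U : Type*} [Fintype X] [Fintype Y] [Fintype U] (Q : X × Y × U → ℝ) : ℝ :=
  ∑ x, ∑ y, ∑ u, Q (x, y, u) *
    Real.log (Q (x, y, u) * margY3 Q y / (margXY Q (x, y) * margYU Q (y, u)))

/-- `D(Q_{Y|X} ‖ W | P)` written via the joint pmf `Q_{XY}` (whose `X`-marginal is `P`). -/
def condDKLJoint {X Y : Type*} [Fintype X] [Fintype Y] (QXY : X × Y → ℝ)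
    (W : X → Y → ℝ) (P : X → ℝ) : ℝ :=
  ∑ x, ∑ y, QXY (x, y) * Real.log (QXY (x, y) / (P x * W x y))

/-- Number of messages `M_n = ⌈exp (n R)⌉`. -/
def Mn (R : ℝ) (n : ℕ) : ℕ := ⌈Real.exp (n * R)⌉₊

/-- All codebooks of `M` codewords, each of constant composition `P`. -/
def ccCodebooks {X : Type*} [Fintype X] (n M : ℕ) (P : X → ℝ) :
    Finset (Fin M → Fin n → X) :=
  Finset.univ.filter fun C => ∀ m, C m ∈ typeClass n P

/-- Ensemble-average decoding error probability of an `(n,R,B)`-code for the IB channel: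
the expectation, over a codebook drawn uniformly from the constant composition ensemble of
type `P`, of the average over messages `m` of the probability (under the memoryless channel
`W`) that the decoder output differs from `m` when codeword `C m` is sent. -/
def avgError {X Y L : Type*} [Fintype X] [Fintype Y] (W : X → Y → ℝ) (n M : ℕ)
    (P : X → ℝ) (φ : (Fin n → Y) → L) (ψ : L → (Fin M → Fin n → X) → Fin M) : ℝ :=
  (∑ C ∈ ccCodebooks n M P, (M : ℝ)⁻¹ * ∑ m : Fin M, ∑ y : Fin n → Y,
      if ψ (φ y) C = m then 0 else ∏ t, W (C m t) (y t)) /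
    ((ccCodebooks n M P).card : ℝ)


private lemma pow_self_le_factorial_mul_exp' (n : ℕ) :
    (n : ℝ) ^ n ≤ (n.factorial : ℝ) * Real.exp 1 ^ n := by
  induction n with
  | zero => simp
  | succ n ih =>
    have key : ((n : ℝ) + 1) ^ n ≤ (n : ℝ) ^ n * Real.exp 1 := by
      rcases Nat.eq_zero_or_pos n with h | h
      · subst h; simpa using Real.one_le_exp (by norm_num)
      · have hn : (0 : ℝ) < n := by exact_mod_cast h
        have h1 : (n : ℝ) + 1 = n * (1 + 1 / n) := by field_simp
        have h2 : (1 : ℝ) + 1 / n ≤ Real.exp (1 / n) := by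
          linarith [Real.add_one_le_exp (1 / (n : ℝ))]
        calc ((n : ℝ) + 1) ^ n = (n : ℝ) ^ n * (1 + 1 / n) ^ n := by rw [h1, mul_pow]
          _ ≤ (n : ℝ) ^ n * Real.exp (1 / n) ^ n := by gcongr
          _ = (n : ℝ) ^ n * Real.exp 1 := by
              rw [← Real.exp_nat_mul]; congr 1; field_simp
    have hcast : ((n + 1 : ℕ) : ℝ) = (n : ℝ) + 1 := by push_cast; ring
    calc ((n + 1 : ℕ) : ℝ) ^ (n + 1) = ((n : ℝ) + 1) * ((n : ℝ) + 1) ^ n := by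
          rw [hcast, pow_succ]; ring
      _ ≤ ((n : ℝ) + 1) * ((n : ℝ) ^ n * Real.exp 1) := by gcongr
      _ ≤ ((n : ℝ) + 1) * (((n.factorial : ℝ) * Real.exp 1 ^ n) * Real.exp 1) := by gcongr
      _ = ((n + 1).factorial : ℝ) * Real.exp 1 ^ (n + 1) := by
          rw [Nat.factorial_succ]; push_cast; ring

private lemma factorial_mul_exp_le' (k : ℕ) (hk : 1 ≤ k) :
    (k.factorial : ℝ) * Real.exp 1 ^ k ≤ Real.exp 1 * k * (k : ℝ) ^ k := by
  induction k, hk using Nat.le_induction with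
  | base => simp
  | succ k hk ih =>
    have hkpos : (0 : ℝ) < k := by exact_mod_cast hk
    have h1 : (0 : ℝ) < (k : ℝ) + 1 := by positivity
    set x : ℝ := 1 / ((k : ℝ) + 1) with hxdef
    have hexp : Real.exp x ≤ ((k : ℝ) + 1) / k := by
      have h2 : 1 - x ≤ (Real.exp x)⁻¹ := by
        rw [← Real.exp_neg]; linarith [Real.add_one_le_exp (-x)]
      have h4 : 1 - x = (k : ℝ) / ((k : ℝ) + 1) := by rw [hxdef]; field_simp; ring
      have h6 : (k : ℝ) / ((k : ℝ) + 1) * Real.exp x ≤ 1 := by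
        have h5 := mul_le_mul_of_nonneg_right (h4 ▸ h2) (Real.exp_pos x).le
        rwa [inv_mul_cancel₀ (Real.exp_ne_zero x)] at h5
      rw [le_div_iff₀ hkpos]
      have h7 := mul_le_mul_of_nonneg_right h6 h1.le
      have h8 : (k : ℝ) / ((k : ℝ) + 1) * Real.exp x * ((k : ℝ) + 1)
          = Real.exp x * k := by field_simp
      linarith [h8 ▸ h7]
    have hE : Real.exp 1 * (k : ℝ) ^ (k + 1) ≤ ((k : ℝ) + 1) ^ (k + 1) := by
      have h9 : Real.exp 1 = Real.exp x ^ (k + 1) := by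
        rw [← Real.exp_nat_mul]; congr 1; rw [hxdef]; push_cast; field_simp
      have h10 : Real.exp x ^ (k + 1) ≤ (((k : ℝ) + 1) / k) ^ (k + 1) := by gcongr
      have h11 : (((k : ℝ) + 1) / k) ^ (k + 1) * (k : ℝ) ^ (k + 1)
          = ((k : ℝ) + 1) ^ (k + 1) := by
        rw [div_pow]; field_simp
      calc Real.exp 1 * (k : ℝ) ^ (k + 1)
          ≤ (((k : ℝ) + 1) / k) ^ (k + 1) * (k : ℝ) ^ (k + 1) := by rw [h9]; gcongr
        _ = ((k : ℝ) + 1) ^ (k + 1) := h11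
    have hcast : ((k + 1 : ℕ) : ℝ) = (k : ℝ) + 1 := by push_cast; ring
    calc ((k + 1).factorial : ℝ) * Real.exp 1 ^ (k + 1)
        = ((k : ℝ) + 1) * (((k.factorial : ℝ)) * Real.exp 1 ^ k) * Real.exp 1 := by
          rw [Nat.factorial_succ]; push_cast; ring
      _ ≤ ((k : ℝ) + 1) * (Real.exp 1 * k * (k : ℝ) ^ k) * Real.exp 1 := by gcongr
      _ = ((k : ℝ) + 1) * (Real.exp 1 * (Real.exp 1 * (k : ℝ) ^ (k + 1))) := by ring
      _ ≤ ((k : ℝ) + 1) * (Real.exp 1 * ((k : ℝ) + 1) ^ (k + 1)) := by gcongr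
      _ = Real.exp 1 * ((k + 1 : ℕ) : ℝ) * (((k + 1 : ℕ) : ℝ)) ^ (k + 1) := by
          rw [hcast]; ring

private lemma exp_entropy_eq' {X : Type*} [Fintype X] {n : ℕ} (hn : 0 < n) {Q : X → ℝ}
    (k : X → ℕ) (hk : ∀ a, (n : ℝ) * Q a = k a) :
    Real.exp (n * shEntropy Q) * ∏ a, ((k a : ℝ)) ^ (k a) = (n : ℝ) ^ (∑ a, k a) := by
  have hnR : (0 : ℝ) < n := by exact_mod_cast hn
  have hQ : ∀ a, Q a = (k a : ℝ) / n := by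
    intro a; rw [eq_div_iff hnR.ne']; linarith [hk a]
  have hpt : ∀ a : X, Real.exp ((n : ℝ) * Real.negMulLog (Q a)) * (k a : ℝ) ^ (k a)
      = (n : ℝ) ^ (k a) := by
    intro a
    rcases Nat.eq_zero_or_pos (k a) with h | h
    · rw [h]; simp [hQ a, h, Real.negMulLog]
    · have hka : (0 : ℝ) < k a := by exact_mod_cast h
      have hlog : (n : ℝ) * Real.negMulLog (Q a)
          = (k a : ℝ) * Real.log n - (k a : ℝ) * Real.log (k a) := by
        rw [hQ a, Real.negMulLog, Real.log_div hka.ne' hnR.ne']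
        field_simp; ring
      rw [hlog, Real.exp_sub, Real.exp_nat_mul, Real.exp_nat_mul,
        Real.exp_log hnR, Real.exp_log hka]
      have hz : (k a : ℝ) ^ (k a) ≠ 0 := by positivity
      field_simp
  calc Real.exp ((n : ℝ) * shEntropy Q) * ∏ a, ((k a : ℝ)) ^ (k a)
      = (∏ a, Real.exp ((n : ℝ) * Real.negMulLog (Q a))) * ∏ a, ((k a : ℝ)) ^ (k a) := by
        rw [shEntropy, Finset.mul_sum, Real.exp_sum]
    _ = ∏ a, (Real.exp ((n : ℝ) * Real.negMulLog (Q a)) * ((k a : ℝ)) ^ (k a)) :=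
        (Finset.prod_mul_distrib).symm
    _ = ∏ a, (n : ℝ) ^ (k a) := Finset.prod_congr rfl (fun a _ => hpt a)
    _ = (n : ℝ) ^ (∑ a, k a) := by rw [Finset.prod_pow_eq_pow_sum]

private lemma typeClass_card_lower' {X : Type*} [Fintype X] [Nonempty X] {n : ℕ} (hn : 1 ≤ n)
    {Q : X → ℝ} (hQ : IsNType n Q) :
    Real.exp (n * shEntropy Q)
      ≤ ((typeClass n Q).card : ℝ) * (Real.exp 1 * n) ^ (Fintype.card X) := by
  classical
  have hnR : (0 : ℝ) < n := by exact_mod_cast hn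
  obtain ⟨⟨hQ0, hQ1⟩, hint⟩ := hQ
  choose k hk using hint
  have hsum : ∑ a, k a = n := by
    have : ((∑ a, k a : ℕ) : ℝ) = (n : ℝ) := by
      push_cast
      rw [Finset.sum_congr rfl (fun a _ => (hk a).symm), ← Finset.mul_sum, hQ1, mul_one]
    exact_mod_cast this
  -- construct a base sequence x₀ of type Q
  have hcardsig : Fintype.card (Σ a : X, Fin (k a)) = n := by
    simp [Fintype.card_sigma, hsum]
  obtain ⟨e⟩ : Nonempty (Fin n ≃ Σ a : X, Fin (k a)) :=
    ⟨Fintype.equivOfCardEq (by simp [hcardsig])⟩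
  set x₀ : Fin n → X := fun t => (e t).1 with hx₀def
  have hfibcard : ∀ a : X, Fintype.card {t : Fin n // x₀ t = a} = k a := by
    intro a
    have e1 : {t : Fin n // x₀ t = a} ≃ {s : Σ a' : X, Fin (k a') // s.1 = a} :=
      e.subtypeEquiv (fun t => Iff.rfl)
    have e2 : {s : Σ a' : X, Fin (k a') // s.1 = a} ≃ Fin (k a) :=
      { toFun := fun s => s.2 ▸ s.1.2
        invFun := fun j => ⟨⟨a, j⟩, rfl⟩
        left_inv := by rintro ⟨⟨a', j⟩, rfl⟩; rfl
        right_inv := fun j => rfl }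
    rw [Fintype.card_congr (e1.trans e2), Fintype.card_fin]
  have hfiber : ∀ a : X, (Finset.univ.filter fun t => x₀ t = a).card = k a := by
    intro a; rw [← hfibcard a, Fintype.card_subtype]
  have hx₀ : x₀ ∈ typeClass n Q := by
    simp only [typeClass, Finset.mem_filter, Finset.mem_univ, true_and]
    funext a
    rw [empDist, hfiber a, eq_comm, eq_div_iff hnR.ne', mul_comm]
    exact hk a
  -- counting: n! ≤ |T| * ∏ (k a)!
  have hcount : n.factorial ≤ (typeClass n Q).card * ∏ a, (k a).factorial := by
    have hTmem : ∀ σ : Equiv.Perm (Fin n), (x₀ ∘ σ) ∈ typeClass n Q := by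
      intro σ
      simp only [typeClass, Finset.mem_filter, Finset.mem_univ, true_and]
      have hcards : ∀ a : X, (Finset.univ.filter fun t => (x₀ ∘ σ) t = a).card
          = (Finset.univ.filter fun t => x₀ t = a).card := by
        intro a
        apply Finset.card_bij' (fun t _ => σ t) (fun t _ => σ.symm t)
        · intro t ht
          simp only [Finset.mem_filter, Finset.mem_univ, true_and, Function.comp] at ht ⊢
          exact ht
        · intro t ht
          simp only [Finset.mem_filter, Finset.mem_univ, true_and, Function.comp] at ht ⊢
          simpa using ht
        · intro t _; simp
        · intro t _; simp
      funext a
      have hx := congrFun ((Finset.mem_filter.mp hx₀).2) a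
      rw [empDist, hcards a]
      rw [empDist] at hx
      exact hx
    have hpart : Fintype.card (Equiv.Perm (Fin n))
        = ∑ y ∈ typeClass n Q, (Finset.univ.filter fun σ : Equiv.Perm (Fin n) =>
            x₀ ∘ σ = y).card := by
      rw [← Finset.card_univ]
      exact Finset.card_eq_sum_card_fiberwise (fun σ _ => hTmem σ)
    have hfib : ∀ y ∈ typeClass n Q,
        (Finset.univ.filter fun σ : Equiv.Perm (Fin n) => x₀ ∘ σ = y).card
          ≤ ∏ a, (k a).factorial := by
      intro y hy
      rcases (Finset.univ.filter fun σ : Equiv.Perm (Fin n) =>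
        x₀ ∘ σ = y).eq_empty_or_nonempty with h | ⟨σ₀, hσ₀⟩
      · simp [h]
      · have hσ₀' : x₀ ∘ σ₀ = y := (Finset.mem_filter.mp hσ₀).2
        set stab : Finset (Equiv.Perm (Fin n)) :=
          Finset.univ.filter fun σ => x₀ ∘ σ = x₀ with hstabdef
        have h1 : (Finset.univ.filter fun σ : Equiv.Perm (Fin n) => x₀ ∘ σ = y).card
            ≤ stab.card := by
          apply Finset.card_le_card_of_injOn (fun σ => σ * σ₀⁻¹)
          · intro σ hσ
            have hσ' : x₀ ∘ σ = y := (Finset.mem_filter.mp hσ).2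
            simp only [hstabdef, Finset.mem_coe, Finset.mem_filter, Finset.mem_univ, true_and]
            funext t
            have h2 := congrFun hσ' ((σ₀⁻¹ : Equiv.Perm (Fin n)) t)
            have h3 := congrFun hσ₀' ((σ₀⁻¹ : Equiv.Perm (Fin n)) t)
            simp only [Function.comp] at h2 h3 ⊢
            rw [Equiv.Perm.mul_apply, h2, ← h3]
            simp
          · intro a _ b _ hab
            exact mul_right_cancel hab
        have h2 : stab.card ≤ ∏ a, (k a).factorial := by
          have hmap : stab.card
              ≤ Fintype.card (∀ a : X, {t : Fin n // x₀ t = a} ↪ {t : Fin n // x₀ t = a}) := by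
            rw [← Finset.card_univ]
            apply Finset.card_le_card_of_injOn
              (fun σ => fun a =>
                if h : ∀ t : {t : Fin n // x₀ t = a}, x₀ (σ t.1) = a then
                  ⟨fun t => ⟨σ t.1, h t⟩,
                    fun u v huv => Subtype.ext (σ.injective (congrArg Subtype.val huv))⟩
                else Function.Embedding.refl _)
            · intro σ _; exact Finset.mem_univ _
            · intro σ hσ σ' hσ' hee
              have hc : ∀ (τ : Equiv.Perm (Fin n)), τ ∈ stab →
                  ∀ a, ∀ t : {t : Fin n // x₀ t = a}, x₀ (τ t.1) = a := by
                intro τ hτ a t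
                have := congrFun (Finset.mem_filter.mp hτ).2 t.1
                simp only [Function.comp] at this
                rw [this, t.2]
              apply Equiv.ext
              intro t
              have h4 := congrFun hee (x₀ t)
              simp only [dif_pos (hc σ hσ (x₀ t)), dif_pos (hc σ' hσ' (x₀ t))] at h4
              have h5 := congrArg (fun (f : {u : Fin n // x₀ u = x₀ t} ↪
                  {u : Fin n // x₀ u = x₀ t}) => (f ⟨t, rfl⟩).1) h4
              exact h5
          calc stab.card
              ≤ Fintype.card (∀ a : X, {t : Fin n // x₀ t = a} ↪ {t : Fin n // x₀ t = a}) :=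
                hmap
            _ = ∏ a, (k a).factorial := by
                rw [Fintype.card_pi]
                refine Finset.prod_congr rfl (fun a _ => ?_)
                rw [Fintype.card_embedding_eq, hfibcard a, Nat.descFactorial_self]
        exact h1.trans h2
    calc n.factorial = Fintype.card (Equiv.Perm (Fin n)) := by
          rw [Fintype.card_perm, Fintype.card_fin]
      _ = ∑ y ∈ typeClass n Q, (Finset.univ.filter fun σ : Equiv.Perm (Fin n) =>
            x₀ ∘ σ = y).card := hpart
      _ ≤ ∑ _y ∈ typeClass n Q, ∏ a, (k a).factorial := Finset.sum_le_sum hfib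
      _ = (typeClass n Q).card * ∏ a, (k a).factorial := by
          rw [Finset.sum_const, smul_eq_mul]
  -- now the real-number chain
  have hfactub : ∀ a : X, ((k a).factorial : ℝ) * Real.exp 1 ^ (k a)
      ≤ (Real.exp 1 * n) * (k a : ℝ) ^ (k a) := by
    intro a
    rcases Nat.eq_zero_or_pos (k a) with h | h
    · rw [h]
      simp only [Nat.factorial_zero, pow_zero, Nat.cast_one, one_mul, Nat.cast_zero, mul_one]
      have h1n : (1:ℝ) ≤ n := by exact_mod_cast hn
      have := Real.one_le_exp (zero_le_one)
      nlinarith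
    · have hkn : k a ≤ n := by
        rw [← hsum]
        exact Finset.single_le_sum (fun a _ => Nat.zero_le _) (Finset.mem_univ a)
      calc ((k a).factorial : ℝ) * Real.exp 1 ^ (k a)
          ≤ Real.exp 1 * (k a) * (k a : ℝ) ^ (k a) := factorial_mul_exp_le' _ h
        _ ≤ Real.exp 1 * n * (k a : ℝ) ^ (k a) := by
            have hcst : ((k a : ℕ) : ℝ) ≤ (n : ℝ) := by exact_mod_cast hkn
            have h0 : (0:ℝ) ≤ (k a : ℝ) ^ (k a) := by positivity
            exact mul_le_mul_of_nonneg_right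
              (mul_le_mul_of_nonneg_left hcst (Real.exp_pos (1:ℝ)).le) h0
  have hprodpos : (0 : ℝ) < ∏ a, ((k a : ℝ)) ^ (k a) := by
    apply Finset.prod_pos
    intro a _
    rcases Nat.eq_zero_or_pos (k a) with h | h
    · rw [h]; norm_num
    · have : (0:ℝ) < k a := by exact_mod_cast h
      positivity
  have hent := exp_entropy_eq' (by omega : 0 < n) k hk
  rw [hsum] at hent
  have hmain : Real.exp (n * shEntropy Q) * ∏ a, ((k a : ℝ)) ^ (k a)
      ≤ (((typeClass n Q).card : ℝ) * (Real.exp 1 * n) ^ (Fintype.card X))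
          * ∏ a, ((k a : ℝ)) ^ (k a) := by
    rw [hent]
    calc (n : ℝ) ^ n ≤ (n.factorial : ℝ) * Real.exp 1 ^ n :=
          pow_self_le_factorial_mul_exp' n
      _ ≤ (((typeClass n Q).card : ℝ) * ∏ a, ((k a).factorial : ℝ)) * Real.exp 1 ^ n := by
          have h6 : (n.factorial : ℝ) ≤ ((typeClass n Q).card : ℝ) * ∏ a, ((k a).factorial : ℝ) := by
            have := hcount
            push_cast
            exact_mod_cast Nat.cast_le.mpr this
          have : (0:ℝ) ≤ Real.exp 1 ^ n := by positivity
          nlinarith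
      _ = ((typeClass n Q).card : ℝ) * ∏ a, (((k a).factorial : ℝ) * Real.exp 1 ^ (k a)) := by
          rw [Finset.prod_mul_distrib, ← hsum]
          rw [Finset.prod_pow_eq_pow_sum]
          ring
      _ ≤ ((typeClass n Q).card : ℝ) * ∏ a, ((Real.exp 1 * n) * (k a : ℝ) ^ (k a)) := by
          apply mul_le_mul_of_nonneg_left _ (Nat.cast_nonneg _)
          apply Finset.prod_le_prod
          · intro a _; positivity
          · intro a _; exact hfactub a
      _ = (((typeClass n Q).card : ℝ) * (Real.exp 1 * n) ^ (Fintype.card X))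
            * ∏ a, ((k a : ℝ)) ^ (k a) := by
          rw [Finset.prod_mul_distrib, Finset.prod_const, Finset.card_univ]
          ring
  exact le_of_mul_le_mul_right hmain hprodpos

/-- **Lemma 10** (double-exponential decay of codebooks with few unique codewords): for
every `R̃ > 0` and `ε > 0` there are `c > 0` and `N₀` such that for all `n ≥ N₀` and every
`n`-type `Q` with `H(Q) ≥ R̃ + ε`, a codebook `C` drawn uniformly from `T_n(Q)^N` with
`N = ⌈exp (n R̃)⌉` has at most `N/2` distinct entries with probability at most
`exp (−c·exp (n R̃))`. -/
theorem few_unique_codewords_double_exponential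
    {X : Type*} [Fintype X] [Nonempty X] :
    ∀ Rt ε : ℝ, 0 < Rt → 0 < ε → ∃ c : ℝ, 0 < c ∧ ∃ N₀ : ℕ, ∀ n ≥ N₀, ∀ Q : X → ℝ,
      IsNType n Q → Rt + ε ≤ shEntropy Q →
      (((ccCodebooks n (Mn Rt n) Q).filter fun C =>
          ((Finset.univ.image C).card : ℝ) ≤ (Mn Rt n : ℝ) / 2).card : ℝ) /
        ((ccCodebooks n (Mn Rt n) Q).card : ℝ)
        ≤ Real.exp (-c * Real.exp (n * Rt)) := by
  intro Rt ε hRt hε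
  classical
  refine ⟨1, one_pos, ?_⟩
  set d := Fintype.card X with hd
  obtain ⟨w₀, hw₀⟩ := Filter.eventually_atTop.mp
    ((Real.tendsto_exp_div_pow_atTop d).eventually_ge_atTop
      (Real.exp 1 ^ 4 * Real.exp 1 ^ d / ε ^ d))
  refine ⟨max 1 (⌈w₀ / ε⌉₊ + 1), ?_⟩
  intro n hn Q hQ hH
  have hn1 : 1 ≤ n := le_trans (le_max_left _ _) hn
  have hnR : (0 : ℝ) < n := by exact_mod_cast hn1
  have hnw : w₀ ≤ (n : ℝ) * ε := by
    rcases le_or_gt w₀ 0 with h | h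
    · nlinarith
    · have h1 : ⌈w₀ / ε⌉₊ + 1 ≤ n := le_trans (le_max_right _ _) hn
      have h2 : w₀ / ε ≤ (n : ℝ) := by
        have := Nat.le_ceil (w₀ / ε)
        have h3 : ((⌈w₀ / ε⌉₊ : ℕ) : ℝ) ≤ (n : ℝ) := by exact_mod_cast le_trans (Nat.le_succ _) h1
        linarith
      calc w₀ = w₀ / ε * ε := by field_simp
        _ ≤ (n : ℝ) * ε := by gcongr
  have hnε : (0 : ℝ) < (n : ℝ) * ε := by positivity
  have hKdiv := hw₀ ((n : ℝ) * ε) hnw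
  have hK2 : Real.exp 1 ^ 4 * Real.exp 1 ^ d / ε ^ d * ((n : ℝ) * ε) ^ d
      ≤ Real.exp ((n : ℝ) * ε) := (le_div_iff₀ (by positivity)).mp hKdiv
  have hKey : Real.exp 1 ^ 4 * (Real.exp 1 * n) ^ d ≤ Real.exp ((n : ℝ) * ε) := by
    have heq : Real.exp 1 ^ 4 * (Real.exp 1 * n) ^ d
        = Real.exp 1 ^ 4 * Real.exp 1 ^ d / ε ^ d * ((n : ℝ) * ε) ^ d := by
      rw [mul_pow, mul_pow]
      field_simp
    rw [heq]; exact hK2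
  -- abbreviations
  set M := Mn Rt n with hMdef
  set T := typeClass n Q with hTdef
  set t := T.card with htdef
  set s := M / 2 with hsdef
  set en := Real.exp ((n : ℝ) * Rt) with hendef
  have hen1 : 1 ≤ en := Real.one_le_exp (by positivity)
  have hMge : en ≤ (M : ℝ) := Nat.le_ceil _
  have hMle : (M : ℝ) ≤ en + 1 := le_of_lt (Nat.ceil_lt_add_one (Real.exp_pos _).le)
  have hM1 : 1 ≤ M := by
    have : (1 : ℝ) ≤ (M : ℝ) := le_trans hen1 hMge
    exact_mod_cast this
  have hs2 : s * 2 ≤ M := Nat.div_mul_le_self M 2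
  have hsM : s ≤ M := Nat.div_le_self M 2
  have hsreal : (s : ℝ) ≤ (M : ℝ) / 2 := by
    have : ((s * 2 : ℕ) : ℝ) ≤ (M : ℝ) := by exact_mod_cast hs2
    push_cast at this
    linarith
  have hsen : (s : ℝ) ≤ en := by linarith
  have ht := typeClass_card_lower' hn1 hQ
  rw [← hTdef, ← htdef, ← hd] at ht
  have hHge : Real.exp ((n : ℝ) * (Rt + ε)) ≤ Real.exp ((n : ℝ) * shEntropy Q) :=
    Real.exp_le_exp.mpr (mul_le_mul_of_nonneg_left hH hnR.le)
  have hp : (0 : ℝ) < (Real.exp 1 * n) ^ d := by positivity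
  have htpos : (0 : ℝ) < (t : ℝ) := by
    have h0 : (0 : ℝ) < (t : ℝ) * (Real.exp 1 * n) ^ d :=
      lt_of_lt_of_le (Real.exp_pos _) ht
    nlinarith
  have hsplit : Real.exp ((n : ℝ) * (Rt + ε)) = en * Real.exp ((n : ℝ) * ε) := by
    rw [hendef, ← Real.exp_add]; ring_nf
  have hc1 : (s : ℝ) * Real.exp 1 ^ 4 * (Real.exp 1 * n) ^ d
      ≤ (t : ℝ) * (Real.exp 1 * n) ^ d := by
    calc (s : ℝ) * Real.exp 1 ^ 4 * (Real.exp 1 * n) ^ d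
        = (s : ℝ) * (Real.exp 1 ^ 4 * (Real.exp 1 * n) ^ d) := by ring
      _ ≤ en * (Real.exp 1 ^ 4 * (Real.exp 1 * n) ^ d) := by
          apply mul_le_mul_of_nonneg_right hsen (by positivity)
      _ ≤ en * Real.exp ((n : ℝ) * ε) := by
          apply mul_le_mul_of_nonneg_left hKey (by positivity)
      _ = Real.exp ((n : ℝ) * (Rt + ε)) := hsplit.symm
      _ ≤ Real.exp ((n : ℝ) * shEntropy Q) := hHge
      _ ≤ (t : ℝ) * (Real.exp 1 * n) ^ d := ht
  have hkey : (s : ℝ) * Real.exp 1 ^ 4 ≤ (t : ℝ) := le_of_mul_le_mul_right hc1 hp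
  have hst : s ≤ t := by
    have h4 : (1 : ℝ) ≤ Real.exp 1 ^ 4 := by
      rw [Real.exp_one_pow]
      exact Real.one_le_exp (by positivity)
    have : (s : ℝ) ≤ (t : ℝ) := by nlinarith [(Nat.cast_nonneg s : (0:ℝ) ≤ (s:ℝ))]
    exact_mod_cast this
  -- counting the bad codebooks
  have hBsub : (ccCodebooks n M Q).filter
        (fun C => ((Finset.univ.image C).card : ℝ) ≤ (M : ℝ) / 2)
      ⊆ (T.powersetCard s).biUnion (fun S => Fintype.piFinset (fun _ : Fin M => S)) := by
    intro C hC
    obtain ⟨hC1, hC2⟩ := Finset.mem_filter.mp hC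
    have hCmem : ∀ m, C m ∈ T := (Finset.mem_filter.mp hC1).2
    have himg : Finset.univ.image C ⊆ T := by
      intro a ha
      obtain ⟨m, _, rfl⟩ := Finset.mem_image.mp ha
      exact hCmem m
    have hle : (Finset.univ.image C).card ≤ s := by
      have h2M : (Finset.univ.image C).card * 2 ≤ M := by
        have : ((Finset.univ.image C).card : ℝ) * 2 ≤ (M : ℝ) := by linarith
        exact_mod_cast this
      exact (Nat.le_div_iff_mul_le (by norm_num)).mpr h2M
    obtain ⟨S, hS1, hS2, hS3⟩ := Finset.exists_subsuperset_card_eq himg hle hst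
    refine Finset.mem_biUnion.mpr ⟨S, Finset.mem_powersetCard.mpr ⟨hS2, hS3⟩, ?_⟩
    rw [Fintype.mem_piFinset]
    intro m
    exact hS1 (Finset.mem_image_of_mem C (Finset.mem_univ m))
  have hBcard : ((ccCodebooks n M Q).filter
        (fun C => ((Finset.univ.image C).card : ℝ) ≤ (M : ℝ) / 2)).card
      ≤ t.choose s * s ^ M := by
    calc ((ccCodebooks n M Q).filter _).card
        ≤ ((T.powersetCard s).biUnion (fun S => Fintype.piFinset (fun _ : Fin M => S))).card :=
          Finset.card_le_card hBsub
      _ ≤ ∑ S ∈ T.powersetCard s, (Fintype.piFinset (fun _ : Fin M => S)).card :=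
          Finset.card_biUnion_le
      _ = ∑ _S ∈ T.powersetCard s, s ^ M := by
          refine Finset.sum_congr rfl (fun S hS => ?_)
          rw [Fintype.card_piFinset, (Finset.mem_powersetCard.mp hS).2,
            Finset.prod_const, Finset.card_univ, Fintype.card_fin]
      _ = t.choose s * s ^ M := by
          rw [Finset.sum_const, smul_eq_mul, Finset.card_powersetCard]
  have hccCard : ((ccCodebooks n M Q).card : ℝ) = (t : ℝ) ^ M := by
    have hpi : ccCodebooks n M Q = Fintype.piFinset (fun _ : Fin M => T) := by
      ext C
      simp [ccCodebooks, Fintype.mem_piFinset, hTdef]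
    rw [hpi, Fintype.card_piFinset, Finset.prod_const, Finset.card_univ, Fintype.card_fin]
    push_cast
    ring
  rw [hccCard, div_le_iff₀ (pow_pos htpos M)]
  have hgoal : ((((ccCodebooks n M Q).filter
        (fun C => ((Finset.univ.image C).card : ℝ) ≤ (M : ℝ) / 2)).card : ℝ))
      ≤ (t.choose s : ℝ) * (s : ℝ) ^ M := by
    have := hBcard
    exact_mod_cast this
  rcases Nat.eq_zero_or_pos s with hs0 | hs1
  · have : ((ccCodebooks n M Q).filter
        (fun C => ((Finset.univ.image C).card : ℝ) ≤ (M : ℝ) / 2)).card = 0 := by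
      have := hBcard
      rw [hs0] at this
      simpa [zero_pow (by omega : M ≠ 0)] using this
    rw [this]
    simp only [Nat.cast_zero]
    positivity
  · -- the real chain
    have hsR : (0 : ℝ) < (s : ℝ) := by exact_mod_cast hs1
    have hchoose : (t.choose s : ℝ) * (s.factorial : ℝ) ≤ (t : ℝ) ^ s := by
      have h5 : s.factorial * t.choose s ≤ t ^ s :=
        le_trans (le_of_eq (Nat.descFactorial_eq_factorial_mul_choose t s).symm)
          (Nat.descFactorial_le_pow t s)
      have h6 : (s.factorial * t.choose s : ℕ) ≤ (t ^ s : ℕ) := h5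
      have h7 : ((s.factorial * t.choose s : ℕ) : ℝ) ≤ ((t ^ s : ℕ) : ℝ) := by exact_mod_cast h6
      push_cast at h7
      linarith
    have hsf := pow_self_le_factorial_mul_exp' s
    have h1' : (t.choose s : ℝ) * (s : ℝ) ^ s ≤ (t : ℝ) ^ s * Real.exp 1 ^ s := by
      calc (t.choose s : ℝ) * (s : ℝ) ^ s
          ≤ (t.choose s : ℝ) * ((s.factorial : ℝ) * Real.exp 1 ^ s) :=
            mul_le_mul_of_nonneg_left hsf (Nat.cast_nonneg _)
        _ = ((t.choose s : ℝ) * (s.factorial : ℝ)) * Real.exp 1 ^ s := by ring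
        _ ≤ (t : ℝ) ^ s * Real.exp 1 ^ s :=
            mul_le_mul_of_nonneg_right hchoose (by positivity)
    have hpowsplit : (s : ℝ) ^ M = (s : ℝ) ^ s * (s : ℝ) ^ (M - s) := by
      rw [← pow_add]
      congr 1
      omega
    have htsplit : (t : ℝ) ^ M = (t : ℝ) ^ s * (t : ℝ) ^ (M - s) := by
      rw [← pow_add]
      congr 1
      omega
    have hs4 : (s : ℝ) ≤ Real.exp (-4) * t := by
      have h8 : (s : ℝ) * Real.exp 4 ≤ t := by
        have h8' := hkey
        rw [Real.exp_one_pow] at h8'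
        norm_num at h8'
        exact h8'
      have h9 := mul_le_mul_of_nonneg_right h8 (Real.exp_pos (-4)).le
      rw [mul_assoc, ← Real.exp_add] at h9
      norm_num at h9
      linarith
    have hcastMs : ((M - s : ℕ) : ℝ) = (M : ℝ) - (s : ℝ) := by
      push_cast [hsM]
      ring
    have hexplin : (s : ℝ) + (-4) * ((M - s : ℕ) : ℝ) ≤ -en := by
      rw [hcastMs]
      linarith
    have h2 : Real.exp 1 ^ s * (s : ℝ) ^ (M - s)
        ≤ Real.exp (-en) * (t : ℝ) ^ (M - s) := by
      calc Real.exp 1 ^ s * (s : ℝ) ^ (M - s)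
          ≤ Real.exp 1 ^ s * (Real.exp (-4) * t) ^ (M - s) := by
            apply mul_le_mul_of_nonneg_left _ (by positivity)
            exact pow_le_pow_left₀ (Nat.cast_nonneg s) hs4 _
        _ = Real.exp ((s : ℝ) + (-4) * ((M - s : ℕ) : ℝ)) * (t : ℝ) ^ (M - s) := by
            rw [mul_pow, Real.exp_one_pow, Real.exp_add, ← Real.exp_nat_mul]
            ring_nf
        _ ≤ Real.exp (-en) * (t : ℝ) ^ (M - s) := by
            apply mul_le_mul_of_nonneg_right (Real.exp_le_exp.mpr hexplin) (by positivity)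
    calc ((((ccCodebooks n M Q).filter
          (fun C => ((Finset.univ.image C).card : ℝ) ≤ (M : ℝ) / 2)).card : ℝ))
        ≤ (t.choose s : ℝ) * (s : ℝ) ^ M := hgoal
      _ = ((t.choose s : ℝ) * (s : ℝ) ^ s) * (s : ℝ) ^ (M - s) := by
          rw [hpowsplit]; ring
      _ ≤ ((t : ℝ) ^ s * Real.exp 1 ^ s) * (s : ℝ) ^ (M - s) := by
          apply mul_le_mul_of_nonneg_right h1' (by positivity)
      _ = (t : ℝ) ^ s * (Real.exp 1 ^ s * (s : ℝ) ^ (M - s)) := by ring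
      _ ≤ (t : ℝ) ^ s * (Real.exp (-en) * (t : ℝ) ^ (M - s)) := by
          apply mul_le_mul_of_nonneg_left h2 (by positivity)
      _ = Real.exp (-1 * en) * (t : ℝ) ^ M := by
          rw [htsplit]; ring_nf


end
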